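/- Let α be a positive real number such that α² is irrational. Then there exist positive integers p and q with p ≡ 1 (mod 47), q ≡ 1 (mod 47), and q < p/α² < q + 1/2. -/

import Mathlib

/-- Multiples of a small positive step `u` hit any window `(c + 47m, c + 47m + 1/2)`. -/
lemma step_lemma (u c : ℝ) (hu : 0 < u) (hu2 : u < 1/2) :
    ∃ (K : ℕ) (m : ℤ), c + 47*m < K*u ∧ K*u < c + 47*m + 1/2 := by
  set m : ℤ := ⌈(-c)/47⌉ with hm
  have hc' : 0 ≤ c + 47*m := by
    have := Int.le_ceil ((-c)/47)
    nlinarith [this]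
  set c' : ℝ := c + 47*m with hc'def
  have hfl : (0:ℤ) ≤ ⌊c'/u⌋ := Int.floor_nonneg.mpr (div_nonneg hc' hu.le)
  refine ⟨(⌊c'/u⌋).toNat + 1, m, ?_, ?_⟩
  · have h1 : c'/u < (⌊c'/u⌋ : ℝ) + 1 := Int.lt_floor_add_one _
    have hK : ((⌊c'/u⌋.toNat + 1 : ℕ) : ℝ) = (⌊c'/u⌋ : ℝ) + 1 := by
      exact_mod_cast congrArg (fun z : ℤ => ((z + 1 : ℤ) : ℝ)) (Int.toNat_of_nonneg hfl)
    rw [hK]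
    have := (div_lt_iff₀ hu).mp h1
    linarith
  · have h2 : (⌊c'/u⌋ : ℝ) ≤ c'/u := Int.floor_le _
    have hK : ((⌊c'/u⌋.toNat + 1 : ℕ) : ℝ) = (⌊c'/u⌋ : ℝ) + 1 := by
      exact_mod_cast congrArg (fun z : ℤ => ((z + 1 : ℤ) : ℝ)) (Int.toNat_of_nonneg hfl)
    rw [hK]
    have := (le_div_iff₀ hu).mp h2
    nlinarith

/-- Core lemma: given a positive `ξ` and a small nonzero combination
`U = a·47ξ - 47b` with `a > 0`, we find `n, M : ℕ` with
`47M+1 < (47n+1)ξ < 47M + 3/2`. -/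
lemma key_lemma (ξ : ℝ) (hξ : 0 < ξ) (a b : ℤ) (ha : 0 < a)
    (h1 : |(a:ℝ)*(47*ξ) - 47*b| < 1/2) (h0 : (a:ℝ)*(47*ξ) - 47*b ≠ 0) :
    ∃ n M : ℕ, (47*M+1 : ℝ) < (47*n+1)*ξ ∧ ((47*n+1):ℝ)*ξ < 47*M + 3/2 := by
  set U : ℝ := (a:ℝ)*(47*ξ) - 47*b with hU
  have habs : -(1/2) < U ∧ U < 1/2 := abs_lt.mp h1
  have finish : ∀ (K : ℕ) (m : ℤ),
      1 - ξ + 47*m < K*U → K*U < 1 - ξ + 47*m + 1/2 →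
      ∃ n M : ℕ, (47*M+1 : ℝ) < (47*n+1)*ξ ∧ ((47*n+1):ℝ)*ξ < 47*M + 3/2 := by
    intro K m hlo hhi
    set n : ℕ := K * a.toNat with hn
    have hcast : ((a.toNat:ℕ):ℝ) = (a:ℝ) := by exact_mod_cast Int.toNat_of_nonneg ha.le
    have hna : ((n:ℝ)) = (K:ℝ) * (a:ℝ) := by
      rw [hn, Nat.cast_mul, hcast]
    set M' : ℤ := m + K*b with hM'
    have hx : ((47*n+1):ℝ)*ξ = (K:ℝ)*U + 47*((K:ℝ)*b) + ξ := by
      rw [hU]; rw [show ((47*n+1):ℝ) = 47*(n:ℝ)+1 by norm_num, hna]; ring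
    have hxlo : (47*(M':ℝ)+1) < ((47*n+1):ℝ)*ξ := by
      rw [hx]; push_cast [hM']; linarith
    have hxhi : ((47*n+1):ℝ)*ξ < 47*(M':ℝ) + 3/2 := by
      rw [hx]; push_cast [hM']; linarith
    have hxpos : (0:ℝ) < ((47*n+1):ℝ)*ξ := by
      have : (0:ℝ) < ((47*n+1):ℝ) := by positivity
      positivity
    have hM'nn : 0 ≤ M' := by
      by_contra h
      push_neg at h
      have : (M':ℝ) ≤ -1 := by exact_mod_cast Int.le_sub_one_of_lt h
      linarith
    refine ⟨n, M'.toNat, ?_, ?_⟩ <;>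
      rw [show ((M'.toNat : ℕ) : ℝ) = (M' : ℝ) by exact_mod_cast Int.toNat_of_nonneg hM'nn]
    · exact hxlo
    · exact hxhi
  rcases lt_or_gt_of_ne h0 with hneg | hpos
  · -- U < 0 : use -U
    obtain ⟨K, m, hlo, hhi⟩ := step_lemma (-U) (ξ - 3/2) (by linarith) (by linarith [habs.1])
    refine finish K (-m) ?_ ?_
    · push_cast; nlinarith [hhi]
    · push_cast; nlinarith [hlo]
  · obtain ⟨K, m, hlo, hhi⟩ := step_lemma U (1 - ξ) hpos habs.2
    exact finish K m hlo hhi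

/-- If `α > 0` and `α²` is irrational, then there are positive integers `p, q`,
both congruent to 1 modulo 47, with `q < p/α² < q + 1/2`. -/
theorem stmt_18 (α : ℝ) (hα : 0 < α) (hirr : Irrational (α ^ 2)) :
    ∃ p q : ℕ, 0 < p ∧ 0 < q ∧ p % 47 = 1 ∧ q % 47 = 1 ∧
      (q : ℝ) < (p : ℝ) / α ^ 2 ∧ (p : ℝ) / α ^ 2 < (q : ℝ) + 1 / 2 := by
  set ξ : ℝ := (α^2)⁻¹ with hξdef
  have hα2 : 0 < α^2 := by positivity
  have hξ : 0 < ξ := by positivity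
  have hξirr : Irrational ξ := hirr.inv
  obtain ⟨j, k, hk0, hk188, happrox⟩ :=
    Real.exists_int_int_abs_mul_sub_le ξ (n := 188) (by norm_num)
  have hUne : (k:ℝ)*(47*ξ) - 47*j ≠ 0 := by
    intro h
    have hkξ : (k:ℝ)*ξ = (j:ℝ) := by linarith [h]
    have : Irrational ((k:ℝ)*ξ) := hξirr.intCast_mul (ne_of_gt hk0)
    exact this.ne_int j hkξ
  have hUsmall : |(k:ℝ)*(47*ξ) - 47*j| < 1/2 := by
    have : (k:ℝ)*(47*ξ) - 47*j = 47*((k:ℝ)*ξ - j) := by ring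
    rw [this, abs_mul, abs_of_pos (by norm_num : (0:ℝ) < 47)]
    have h189 : ((188:ℕ):ℝ) + 1 = 189 := by norm_num
    rw [h189] at happrox
    nlinarith [happrox]
  obtain ⟨n, M, hlo, hhi⟩ := key_lemma ξ hξ k j hk0 hUsmall hUne
  refine ⟨47*n+1, 47*M+1, by omega, by omega, by omega, by omega, ?_, ?_⟩
  · rw [div_eq_mul_inv, ← hξdef]
    push_cast at hlo ⊢
    linarith [hlo]
  · rw [div_eq_mul_inv, ← hξdef]
    push_cast at hhi ⊢
    linarith [hhi]
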